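/- Bound on the ellipticity ratio by the square of the largest eigenvalue: there is a constant C(n) such that for every λ ∈ ℝⁿ with λ₁ ≥ λ₂ ≥ ⋯ ≥ λₙ, σ₂(λ) = 1 and σ₁(λ) > 0, one has ( max_{1≤i≤n} (σ₁ − λᵢ) )ⁿ / ∏_{i=1}^{n} (σ₁ − λᵢ) ≤ C(n) λ₁². -/
import Mathlib

/-- Bound on the ellipticity ratio of the linearized operator of the sigma-2 equation by
the square of the largest eigenvalue. -/
theorem sigma2_ellipticity_ratio_bound (n : ℕ) (hn : 1 ≤ n) :
    ∃ C : ℝ, 0 < C ∧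
      ∀ l : Fin n → ℝ,
        (∀ i j : Fin n, i ≤ j → l j ≤ l i) →
        ((∑ i, l i) ^ 2 - ∑ i, (l i) ^ 2) / 2 = 1 →
        0 < ∑ i, l i →
        (Finset.univ.sup' (Finset.univ_nonempty_iff.mpr ⟨⟨0, by omega⟩⟩)
              fun i : Fin n => (∑ j, l j) - l i) ^ n /
            (∏ i, ((∑ j, l j) - l i))
          ≤ C * (l ⟨0, by omega⟩) ^ 2 := by
  have hn' : (0:ℝ) < n := by exact_mod_cast hn
  refine ⟨(2:ℝ)^(2*n) * (n:ℝ)^(2*n), by positivity, ?_⟩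
  intro l hsort h2 hs
  set s := ∑ i, l i with hsdef
  let i0 : Fin n := ⟨0, by omega⟩
  have hl0eq : l ⟨0, by omega⟩ = l i0 := rfl
  rw [hl0eq]
  have hQ : s^2 = (∑ i, (l i)^2) + 2 := by linarith
  have hsq : ∀ i, (l i)^2 < s^2 := by
    intro i
    have h1 : (l i)^2 ≤ ∑ j, (l j)^2 :=
      Finset.single_le_sum (fun j _ => sq_nonneg (l j)) (Finset.mem_univ i)
    linarith
  have hlt : ∀ i, l i < s := fun i => by nlinarith [hsq i]
  have hgt : ∀ i, -s < l i := fun i => by nlinarith [hsq i]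
  have hpos : ∀ i, 0 < s - l i := fun i => by linarith [hlt i]
  have hle2 : ∀ i, s - l i ≤ 2*s := fun i => by linarith [hgt i]
  have hsn : s ≤ (n:ℝ) * l i0 := by
    calc s = ∑ i, l i := rfl
    _ ≤ ∑ _i : Fin n, l i0 :=
        Finset.sum_le_sum (fun i _ => hsort i0 i (by simp [Fin.le_def, i0]))
    _ = (n:ℝ) * l i0 := by
        simp [Finset.sum_const, Finset.card_univ, nsmul_eq_mul]
  have hl0 : 0 < l i0 := by nlinarith
  have hB : 0 < ∏ i, (s - l i) := Finset.prod_pos (fun i _ => hpos i)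
  have hsup_le : (Finset.univ.sup' (Finset.univ_nonempty_iff.mpr ⟨⟨0, by omega⟩⟩)
      fun i : Fin n => s - l i) ≤ 2*s :=
    Finset.sup'_le _ _ (fun i _ => hle2 i)
  have hsup_nonneg : 0 ≤ (Finset.univ.sup' (Finset.univ_nonempty_iff.mpr ⟨⟨0, by omega⟩⟩)
      fun i : Fin n => s - l i) :=
    le_trans (le_of_lt (hpos i0)) (Finset.le_sup' (fun i : Fin n => s - l i) (Finset.mem_univ i0))
  -- denominator lower bound
  set E := Finset.univ.erase i0 with hE
  have hcard : E.card = n - 1 := by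
    rw [hE, Finset.card_erase_of_mem (Finset.mem_univ i0), Finset.card_univ, Fintype.card_fin]
  have hQ0 : (l i0)^2 ≤ ∑ j, (l j)^2 :=
    Finset.single_le_sum (fun j _ => sq_nonneg (l j)) (Finset.mem_univ i0)
  have hfac0 : 1 ≤ (s - l i0) * s := by
    nlinarith [sq_nonneg (s - l i0), hpos i0, hlt i0]
  have hpair : ∀ i ∈ E, (l i0)^2 + (l i)^2 ≤ ∑ j, (l j)^2 := by
    intro i hi
    have hne : i0 ≠ i := (Finset.ne_of_mem_erase hi).symm
    have h3 : ∑ j ∈ ({i0, i} : Finset (Fin n)), (l j)^2 ≤ ∑ j, (l j)^2 :=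
      Finset.sum_le_sum_of_subset_of_nonneg (Finset.subset_univ _)
        (fun j _ _ => sq_nonneg _)
    rwa [Finset.sum_pair hne] at h3
  have hfaci : ∀ i ∈ E, (l i0)^2 ≤ (s - l i) * (2*s) := by
    intro i hi
    have h4 := hpair i hi
    nlinarith [hpos i, sq_nonneg (s - l i)]
  have hprodE : (l i0)^(2*(n-1)) ≤ (∏ i ∈ E, (s - l i)) * (2*s)^(n-1) := by
    have h1 : ∏ _i ∈ E, (l i0)^2 ≤ ∏ i ∈ E, ((s - l i) * (2*s)) :=
      Finset.prod_le_prod (fun i _ => sq_nonneg _) hfaci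
    rw [Finset.prod_const, Finset.prod_mul_distrib, Finset.prod_const, hcard] at h1
    rwa [← pow_mul] at h1
  have hD : 0 < s * (2*s)^(n-1) := by positivity
  have hBD : (l i0)^(2*(n-1)) ≤ (∏ i, (s - l i)) * (s * (2*s)^(n-1)) := by
    have hsplit : ∏ i, (s - l i) = (s - l i0) * ∏ i ∈ E, (s - l i) :=
      (Finset.mul_prod_erase Finset.univ _ (Finset.mem_univ i0)).symm
    have step : 1 * (l i0)^(2*(n-1)) ≤
        ((s - l i0) * s) * ((∏ i ∈ E, (s - l i)) * (2*s)^(n-1)) :=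
      mul_le_mul hfac0 hprodE (pow_nonneg (le_of_lt hl0) _)
        (mul_nonneg (le_of_lt (hpos i0)) (le_of_lt hs))
    calc (l i0)^(2*(n-1)) = 1 * (l i0)^(2*(n-1)) := (one_mul _).symm
    _ ≤ ((s - l i0) * s) * ((∏ i ∈ E, (s - l i)) * (2*s)^(n-1)) := step
    _ = (∏ i, (s - l i)) * (s * (2*s)^(n-1)) := by rw [hsplit]; ring
  -- power juggling
  set t := (n:ℝ) * l i0 with ht
  have htpos : 0 < t := mul_pos hn' hl0
  have hkey : (2*s)^n * (s * (2*s)^(n-1)) ≤ (2:ℝ)^(2*n) * t^(2*n) := by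
    have h1 : (2*s)^n * (s * (2*s)^(n-1)) ≤ (2*t)^n * (t * (2*t)^(n-1)) := by
      have h2s : (0:ℝ) ≤ 2*s := by linarith
      have h2st : 2*s ≤ 2*t := by linarith
      exact mul_le_mul (pow_le_pow_left₀ h2s h2st n)
        (mul_le_mul hsn (pow_le_pow_left₀ h2s h2st _) (by positivity) (le_of_lt htpos))
        (by positivity) (by positivity)
    have h2 : (2*t)^n * (t * (2*t)^(n-1)) = (2:ℝ)^(2*n-1) * t^(2*n) := by
      rw [mul_pow 2 t n, mul_pow 2 t (n-1),
        show (2:ℝ)^n * t^n * (t * ((2:ℝ)^(n-1) * t^(n-1)))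
          = ((2:ℝ)^n * 2^(n-1)) * (t^n * t^(n-1) * t) from by ring,
        ← pow_add, ← pow_add, ← pow_succ,
        show n + (n-1) = 2*n-1 from by omega,
        show 2*n-1 + 1 = 2*n from by omega]
    have h3 : (2:ℝ)^(2*n-1) * t^(2*n) ≤ (2:ℝ)^(2*n) * t^(2*n) :=
      mul_le_mul_of_nonneg_right (pow_le_pow_right₀ one_le_two (by omega))
        (pow_nonneg (le_of_lt htpos) _)
    calc (2*s)^n * (s * (2*s)^(n-1)) ≤ (2*t)^n * (t * (2*t)^(n-1)) := h1
    _ = (2:ℝ)^(2*n-1) * t^(2*n) := h2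
    _ ≤ (2:ℝ)^(2*n) * t^(2*n) := h3
  have htpow : t^(2*n) = (n:ℝ)^(2*n) * ((l i0)^2 * (l i0)^(2*(n-1))) := by
    rw [ht, mul_pow, ← pow_add, show 2 + 2*(n-1) = 2*n from by omega]
  -- conclude
  rw [div_le_iff₀ hB]
  refine le_of_mul_le_mul_right ?_ hD
  have hCl : 0 ≤ (2:ℝ)^(2*n) * (n:ℝ)^(2*n) * (l i0)^2 := by positivity
  calc (Finset.univ.sup' (Finset.univ_nonempty_iff.mpr ⟨⟨0, by omega⟩⟩)
        fun i : Fin n => s - l i) ^ n * (s * (2*s)^(n-1))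
      ≤ (2*s)^n * (s * (2*s)^(n-1)) :=
        mul_le_mul_of_nonneg_right (pow_le_pow_left₀ hsup_nonneg hsup_le n) (le_of_lt hD)
    _ ≤ (2:ℝ)^(2*n) * t^(2*n) := hkey
    _ = (2:ℝ)^(2*n) * (n:ℝ)^(2*n) * (l i0)^2 * (l i0)^(2*(n-1)) := by
        rw [htpow]; ring
    _ ≤ (2:ℝ)^(2*n) * (n:ℝ)^(2*n) * (l i0)^2 * ((∏ i, (s - l i)) * (s * (2*s)^(n-1))) :=
        mul_le_mul_of_nonneg_left hBD hCl
    _ = (2:ℝ)^(2*n) * (n:ℝ)^(2*n) * (l i0)^2 * (∏ i, (s - l i)) * (s * (2*s)^(n-1)) := by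
        ring
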